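/- (Nonnegativity of the diffusion coefficient, Definition 2.3.) Assume in addition that the series ∑' n, Real.exp (−ε n) / m n converges, and let Θ ∈ L²_M satisfy Q Θ n p = −(p / m n) * M n p for every n and almost every p. Then the diffusion coefficient D = ∑' n, ∫ p, (p / m n) * Θ n p is finite and nonnegative: D ≥ 0. -/

import Mathlib

open MeasureTheory Real

lemma absmul (a b : ℝ) : |a * b| ≤ (a ^ 2 + b ^ 2) / 2 := by
  have h := two_mul_le_add_sq |a| |b|
  rw [abs_mul]
  rw [sq_abs, sq_abs] at h
  nlinarith [abs_nonneg a, abs_nonneg b]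

noncomputable instance : SFinite (Measure.count : Measure ℕ) := by
  unfold Measure.count
  infer_instance

lemma integral_count_eq (f : ℕ → ℝ) (hf : Integrable f (Measure.count : Measure ℕ)) :
    ∫ n, f n ∂(Measure.count : Measure ℕ) = ∑' n, f n := by
  rw [integral_countable' hf]
  simp [Measure.count_singleton]

lemma integrable_count_of_summable {f : ℕ → ℝ} (h : Summable fun n => |f n|) :
    Integrable f (Measure.count : Measure ℕ) :=
  integrable_count_iff.2 (by simpa [Real.norm_eq_abs] using h)

lemma countProd (f : ℕ → ℝ → ℝ)
    (hmeas : AEStronglyMeasurable (fun ω : ℕ × ℝ => f ω.1 ω.2)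
      ((Measure.count : Measure ℕ).prod volume))
    (h1 : ∀ n, Integrable (f n))
    (h2 : Summable fun n => ∫ p, |f n p|) :
    Integrable (fun ω : ℕ × ℝ => f ω.1 ω.2) ((Measure.count : Measure ℕ).prod volume) ∧
      ∫ ω, f ω.1 ω.2 ∂((Measure.count : Measure ℕ).prod volume) = ∑' n, ∫ p, f n p := by
  have hint : Integrable (fun ω : ℕ × ℝ => f ω.1 ω.2)
      ((Measure.count : Measure ℕ).prod volume) := by
    rw [integrable_prod_iff hmeas]
    refine ⟨Filter.Eventually.of_forall h1, ?_⟩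
    apply integrable_count_of_summable
    have he : ∀ n, |∫ p, ‖f n p‖| = ∫ p, |f n p| := by
      intro n
      rw [abs_of_nonneg (integral_nonneg fun p => norm_nonneg _)]
      simp [Real.norm_eq_abs]
    exact h2.congr fun n => (he n).symm
  refine ⟨hint, ?_⟩
  rw [integral_prod _ hint]
  apply integral_count_eq
  apply integrable_count_of_summable
  apply Summable.of_nonneg_of_le (fun n => abs_nonneg _) _ h2
  intro n
  simpa [Real.norm_eq_abs] using norm_integral_le_integral_norm (f n)

lemma gauss_int {c : ℝ} (hc : 0 < c) :
    (Integrable fun p : ℝ => Real.exp (-(p ^ 2 / (2 * c)))) ∧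
      ∫ p : ℝ, Real.exp (-(p ^ 2 / (2 * c))) = Real.sqrt (2 * Real.pi * c) := by
  have hb : 0 < 1 / (2 * c) := by positivity
  have heq : (fun p : ℝ => Real.exp (-(p ^ 2 / (2 * c)))) =
      fun p : ℝ => Real.exp (-(1 / (2 * c)) * p ^ 2) := by
    funext p; ring_nf
  rw [heq]
  refine ⟨integrable_exp_neg_mul_sq hb, ?_⟩
  rw [integral_gaussian]
  congr 1
  field_simp

lemma gauss_sq {c : ℝ} (hc : 0 < c) :
    (Integrable fun p : ℝ => p ^ 2 * Real.exp (-(p ^ 2 / (2 * c)))) ∧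
      ∫ p : ℝ, p ^ 2 * Real.exp (-(p ^ 2 / (2 * c))) ≤
        4 * c * Real.sqrt (2 * Real.pi * (2 * c)) := by
  have hb : 0 < 1 / (4 * c) := by positivity
  have hbound : ∀ p : ℝ, p ^ 2 * Real.exp (-(p ^ 2 / (2 * c))) ≤
      4 * c * Real.exp (-(p ^ 2 / (2 * (2 * c)))) := by
    intro p
    set y : ℝ := p ^ 2 / (4 * c) with hy
    have hy0 : 0 ≤ y := by positivity
    have h1 : p ^ 2 = 4 * c * y := by rw [hy]; field_simp
    have h2 : p ^ 2 / (2 * c) = y + y := by rw [hy]; field_simp; ring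
    have h3 : p ^ 2 / (2 * (2 * c)) = y := by rw [hy]; ring_nf
    rw [h2, h3, h1]
    have hye : y * Real.exp (-y) ≤ 1 := by
      rw [Real.exp_neg]
      rw [mul_inv_le_iff₀ (Real.exp_pos y)]
      have := Real.add_one_le_exp y
      linarith
    have : Real.exp (-(y + y)) = Real.exp (-y) * Real.exp (-y) := by
      rw [← Real.exp_add]; ring_nf
    rw [this]
    calc 4 * c * y * (Real.exp (-y) * Real.exp (-y))
        = 4 * c * (y * Real.exp (-y)) * Real.exp (-y) := by ring
      _ ≤ 4 * c * 1 * Real.exp (-y) := by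
          apply mul_le_mul_of_nonneg_right _ (Real.exp_pos _).le
          apply mul_le_mul_of_nonneg_left hye (by positivity)
      _ = 4 * c * Real.exp (-y) := by ring
  have hgint := (gauss_int (show (0:ℝ) < 2 * c by positivity))
  have hgint4 : Integrable fun p : ℝ => 4 * c * Real.exp (-(p ^ 2 / (2 * (2 * c)))) :=
    hgint.1.const_mul _
  have hmeas : Measurable fun p : ℝ => p ^ 2 * Real.exp (-(p ^ 2 / (2 * c))) := by
    fun_prop
  have hint : Integrable fun p : ℝ => p ^ 2 * Real.exp (-(p ^ 2 / (2 * c))) := by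
    apply Integrable.mono' hgint4 hmeas.aestronglyMeasurable
    refine Filter.Eventually.of_forall fun p => ?_
    rw [Real.norm_eq_abs, abs_of_nonneg (by positivity)]
    exact hbound p
  refine ⟨hint, ?_⟩
  calc ∫ p : ℝ, p ^ 2 * Real.exp (-(p ^ 2 / (2 * c)))
      ≤ ∫ p : ℝ, 4 * c * Real.exp (-(p ^ 2 / (2 * (2 * c)))) :=
        integral_mono hint hgint4 hbound
    _ = 4 * c * Real.sqrt (2 * Real.pi * (2 * c)) := by
        rw [integral_const_mul, hgint.2]

lemma symm_nonpos (a W W' T T' : ℝ) (ha : 0 ≤ a) (hW : 0 < W) (hW' : 0 < W') :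
    a * (W * T' - W' * T) * (T / W) + a * (W' * T - W * T') * (T' / W') ≤ 0 := by
  have h : a * (W * T' - W' * T) * (T / W) + a * (W' * T - W * T') * (T' / W') =
      -(a * (W * T' - W' * T) ^ 2 / (W * W')) := by
    field_simp
    ring
  rw [h]
  apply neg_nonpos_of_nonneg
  positivity

set_option maxHeartbeats 2000000 in
theorem stmt10
    (m ε : ℕ → ℝ)
    (hm : ∀ n, 0 < m n)
    (hε : Summable fun n => Real.exp (-ε n))
    (Z : ℝ) (hZ : Z = ∑' n, Real.exp (-ε n))
    (M : ℕ → ℝ → ℝ)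
    (hM : ∀ n p, M n p =
      Real.exp (-(p ^ 2 / (2 * m n) + ε n)) / (Real.sqrt (2 * Real.pi * m n) * Z))
    (hMnorm : (∑' n, ∫ p, M n p) = 1)
    (α : ℕ → ℕ → ℝ → ℝ → ℝ)
    (hαmeas : ∀ n n', Measurable fun q : ℝ × ℝ => α n n' q.1 q.2)
    (α₁ α₂ : ℝ) (hα₁ : 0 < α₁) (hα₁₂ : α₁ ≤ α₂)
    (hsym : ∀ n n' p p', α n n' p p' = α n' n p' p)
    (hbd : ∀ n n' p p', α₁ ≤ α n n' p p' ∧ α n n' p p' ≤ α₂)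
    (Q : (ℕ → ℝ → ℝ) → ℕ → ℝ → ℝ)
    (hQ : ∀ f n p, Q f n p =
      ∑' n', ∫ p', α n n' p p' * (M n p * f n' p' - M n' p' * f n p))
    (memL2M : (ℕ → ℝ → ℝ) → Prop)
    (hmem : ∀ f, memL2M f ↔ (∀ n, Measurable (f n)) ∧
      (∀ n, Integrable fun p => f n p ^ 2 / M n p) ∧
      (Summable fun n => ∫ p, f n p ^ 2 / M n p))
    (nrm : (ℕ → ℝ → ℝ) → ℝ)
    (hnrm : ∀ f, nrm f = (∑' n, ∫ p, f n p ^ 2 / M n p) ^ ((1 : ℝ) / 2))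
    (hεm : Summable fun n => Real.exp (-ε n) / m n)
    (Θ : ℕ → ℝ → ℝ) (hΘmem : memL2M Θ)
    (hΘeq : ∀ n, ∀ᵐ p ∂(volume : Measure ℝ), Q Θ n p = -(p / m n) * M n p) :
    (∀ n, Integrable fun p => (p / m n) * Θ n p) ∧
      (Summable fun n => ∫ p, (p / m n) * Θ n p) ∧
      0 ≤ (∑' n, ∫ p, (p / m n) * Θ n p) := by
  obtain ⟨hΘm, hΘint2, hΘsum2⟩ := (hmem Θ).1 hΘmem
  clear hΘmem hmem hnrm hMnorm
  set μ : Measure (ℕ × ℝ) := (Measure.count : Measure ℕ).prod volume with hμdef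
  -- Z positive
  have hZpos : 0 < Z := by
    rw [hZ]
    exact Summable.tsum_pos hε (fun n => (Real.exp_pos _).le) 0 (Real.exp_pos _)
  -- M facts
  have hMpos : ∀ n p, 0 < M n p := by
    intro n p
    rw [hM]
    have h1 : 0 < Real.sqrt (2 * Real.pi * m n) := by
      apply Real.sqrt_pos.2
      have := hm n
      positivity
    exact div_pos (Real.exp_pos _) (mul_pos h1 hZpos)
  have hMeq : ∀ n, M n = fun p =>
      (Real.exp (-ε n) / (Real.sqrt (2 * Real.pi * m n) * Z)) *
        Real.exp (-(p ^ 2 / (2 * m n))) := by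
    intro n; funext p
    rw [hM, show -(p ^ 2 / (2 * m n) + ε n) = -(p ^ 2 / (2 * m n)) + -ε n by ring,
      Real.exp_add]
    ring
  have hsqrtpos : ∀ n, 0 < Real.sqrt (2 * Real.pi * m n) := by
    intro n
    apply Real.sqrt_pos.2
    have := hm n
    positivity
  have hMmeas : ∀ n, Measurable (M n) := by
    intro n
    rw [hMeq n]
    fun_prop
  have hMint : ∀ n, Integrable (M n) := by
    intro n
    rw [hMeq n]
    exact (gauss_int (hm n)).1.const_mul _
  have hMval : ∀ n, ∫ p, M n p = Real.exp (-ε n) / Z := by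
    intro n
    rw [hMeq n, integral_const_mul, (gauss_int (hm n)).2, div_mul_eq_mul_div,
      mul_comm (Real.sqrt (2 * Real.pi * m n)) Z,
      mul_div_mul_right _ _ (hsqrtpos n).ne']
  have hMabssum : Summable fun n => ∫ p, |M n p| := by
    apply ((hε.div_const Z)).congr
    intro n
    rw [← hMval n]
    exact integral_congr_ae (Filter.Eventually.of_forall fun p =>
      (abs_of_pos (hMpos n p)).symm)
  -- second moment bound
  set K : ℕ → ℝ := fun n => 4 * Real.sqrt 2 / Z * (Real.exp (-ε n) / m n) with hKdef
  have hKsum : Summable K := hεm.mul_left _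
  have hPint : ∀ n, Integrable fun p => (p / m n) ^ 2 * M n p := by
    intro n
    have : (fun p => (p / m n) ^ 2 * M n p) = fun p =>
        (Real.exp (-ε n) / (Real.sqrt (2 * Real.pi * m n) * Z) / m n ^ 2) *
          (p ^ 2 * Real.exp (-(p ^ 2 / (2 * m n)))) := by
      funext p
      rw [hMeq n]
      have := (hm n).ne'
      field_simp
    rw [this]
    exact (gauss_sq (hm n)).1.const_mul _
  have hPval : ∀ n, ∫ p, (p / m n) ^ 2 * M n p ≤ K n := by
    intro n
    have heq : (fun p => (p / m n) ^ 2 * M n p) = fun p =>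
        (Real.exp (-ε n) / (Real.sqrt (2 * Real.pi * m n) * Z) / m n ^ 2) *
          (p ^ 2 * Real.exp (-(p ^ 2 / (2 * m n)))) := by
      funext p
      rw [hMeq n]
      have := (hm n).ne'
      field_simp
    rw [heq, integral_const_mul]
    have hC : 0 < Real.exp (-ε n) / (Real.sqrt (2 * Real.pi * m n) * Z) / m n ^ 2 := by
      have h1 := hsqrtpos n
      have h2 := hm n
      positivity
    calc (Real.exp (-ε n) / (Real.sqrt (2 * Real.pi * m n) * Z) / m n ^ 2) *
          ∫ p : ℝ, p ^ 2 * Real.exp (-(p ^ 2 / (2 * m n)))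
        ≤ (Real.exp (-ε n) / (Real.sqrt (2 * Real.pi * m n) * Z) / m n ^ 2) *
          (4 * m n * Real.sqrt (2 * Real.pi * (2 * m n))) := by
          exact mul_le_mul_of_nonneg_left (gauss_sq (hm n)).2 hC.le
      _ = K n := by
          rw [hKdef]
          have hs : Real.sqrt (2 * Real.pi * (2 * m n)) =
              Real.sqrt 2 * Real.sqrt (2 * Real.pi * m n) := by
            rw [← Real.sqrt_mul (by norm_num : (0:ℝ) ≤ 2)]
            congr 1
            ring
          rw [hs]
          have h1 := (hsqrtpos n).ne'
          have h2 := (hm n).ne'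
          set s := Real.sqrt (2 * Real.pi * m n) with hsdef
          field_simp
  -- AM-GM key
  have key : ∀ (n : ℕ) (p x : ℝ),
      |x * Θ n p| ≤ (x ^ 2 * M n p + Θ n p ^ 2 / M n p) / 2 := by
    intro n p x
    have hMp := hMpos n p
    have hs : 0 < Real.sqrt (M n p) := Real.sqrt_pos.2 hMp
    have h1 : x * Θ n p =
        (x * Real.sqrt (M n p)) * (Θ n p / Real.sqrt (M n p)) := by
      field_simp
    rw [h1]
    calc |(x * Real.sqrt (M n p)) * (Θ n p / Real.sqrt (M n p))|
        ≤ ((x * Real.sqrt (M n p)) ^ 2 + (Θ n p / Real.sqrt (M n p)) ^ 2) / 2 :=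
          absmul _ _
      _ = (x ^ 2 * M n p + Θ n p ^ 2 / M n p) / 2 := by
          rw [mul_pow, div_pow, Real.sq_sqrt hMp.le]
  -- Part 1: integrability of (p/m)Θ
  have hInt1 : ∀ n, Integrable fun p => (p / m n) * Θ n p := by
    intro n
    apply Integrable.mono'
      (g := fun p => ((p / m n) ^ 2 * M n p + Θ n p ^ 2 / M n p) / 2)
    · exact ((hPint n).add (hΘint2 n)).div_const 2
    · exact ((measurable_id.div_const (m n)).mul (hΘm n)).aestronglyMeasurable
    · refine Filter.Eventually.of_forall fun p => ?_
      rw [Real.norm_eq_abs]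
      exact key n p (p / m n)
  -- abs integral bound
  have habs1 : ∀ n, ∫ p, |(p / m n) * Θ n p| ≤ (K n + ∫ p, Θ n p ^ 2 / M n p) / 2 := by
    intro n
    calc ∫ p, |(p / m n) * Θ n p|
        ≤ ∫ p, ((p / m n) ^ 2 * M n p + Θ n p ^ 2 / M n p) / 2 := by
          apply integral_mono (hInt1 n).abs (((hPint n).add (hΘint2 n)).div_const 2)
          intro p
          exact key n p (p / m n)
      _ = ((∫ p, (p / m n) ^ 2 * M n p) + ∫ p, Θ n p ^ 2 / M n p) / 2 := by
          rw [integral_div, integral_add (hPint n) (hΘint2 n)]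
      _ ≤ (K n + ∫ p, Θ n p ^ 2 / M n p) / 2 := by
          have := hPval n
          linarith
  have hsum1 : Summable fun n => ∫ p, |(p / m n) * Θ n p| := by
    apply Summable.of_nonneg_of_le
      (fun n => integral_nonneg fun p => abs_nonneg _) habs1
    exact (hKsum.add hΘsum2).div_const 2
  have hsumD : Summable fun n => ∫ p, (p / m n) * Θ n p := by
    apply Summable.of_norm_bounded hsum1
    intro n
    have h := norm_integral_le_integral_norm (μ := volume) fun p => (p / m n) * Θ n p
    simp only [Real.norm_eq_abs] at h ⊢
    exact h
  refine ⟨hInt1, hsumD, ?_⟩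
  -- Θ integrability
  have hTint : ∀ n, Integrable (Θ n) := by
    intro n
    apply Integrable.mono' (g := fun p => (M n p + Θ n p ^ 2 / M n p) / 2)
      (((hMint n).add (hΘint2 n)).div_const 2) (hΘm n).aestronglyMeasurable
    refine Filter.Eventually.of_forall fun p => ?_
    rw [Real.norm_eq_abs]
    have := key n p 1
    simpa using this
  have hTabs : ∀ n, ∫ p, |Θ n p| ≤ ((Real.exp (-ε n) / Z) + ∫ p, Θ n p ^ 2 / M n p) / 2 := by
    intro n
    calc ∫ p, |Θ n p| ≤ ∫ p, (M n p + Θ n p ^ 2 / M n p) / 2 := by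
          apply integral_mono (hTint n).abs (((hMint n).add (hΘint2 n)).div_const 2)
          intro p
          have := key n p 1
          simpa using this
      _ = ((∫ p, M n p) + ∫ p, Θ n p ^ 2 / M n p) / 2 := by
          rw [integral_div, integral_add (hMint n) (hΘint2 n)]
      _ = ((Real.exp (-ε n) / Z) + ∫ p, Θ n p ^ 2 / M n p) / 2 := by rw [hMval n]
  have hTsumAbs : Summable fun n => ∫ p, |Θ n p| := by
    apply Summable.of_nonneg_of_le
      (fun n => integral_nonneg fun p => abs_nonneg _) hTabs
    exact ((hε.div_const Z).add hΘsum2).div_const 2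
  -- measurability on Ω
  have hTΩ : Measurable fun ω : ℕ × ℝ => Θ ω.1 ω.2 :=
    (measurable_from_prod_countable_left (f := fun q : ℝ × ℕ => Θ q.2 q.1)
      fun n => hΘm n).comp measurable_swap
  have hMΩmeas : Measurable fun ω : ℕ × ℝ => M ω.1 ω.2 :=
    (measurable_from_prod_countable_left (f := fun q : ℝ × ℕ => M q.2 q.1)
      fun n => hMmeas n).comp measurable_swap
  have hαΩ : Measurable fun z : (ℕ × ℝ) × ℕ × ℝ => α z.1.1 z.2.1 z.1.2 z.2.2 := by
    have hA : Measurable fun q : (ℝ × ℝ) × ℕ × ℕ => α q.2.1 q.2.2 q.1.1 q.1.2 :=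
      measurable_from_prod_countable_left
        (f := fun q : (ℝ × ℝ) × ℕ × ℕ => α q.2.1 q.2.2 q.1.1 q.1.2)
        fun y => hαmeas y.1 y.2
    exact hA.comp ((measurable_fst.snd.prodMk measurable_snd.snd).prodMk
      (measurable_fst.fst.prodMk measurable_snd.fst))
  -- integrable pieces on Ω
  obtain ⟨hMΩ, -⟩ := countProd M hMΩmeas.aestronglyMeasurable hMint hMabssum
  obtain ⟨hTabsΩ, -⟩ := countProd (fun n p => |Θ n p|)
    hTΩ.abs.aestronglyMeasurable (fun n => (hTint n).abs)
    (hTsumAbs.congr fun n => by simp [abs_abs])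
  obtain ⟨hQuadΩ, -⟩ := countProd (fun n p => Θ n p ^ 2 / M n p)
    ((hTΩ.pow_const 2).div hMΩmeas).aestronglyMeasurable hΘint2
    (hΘsum2.congr fun n => (integral_congr_ae (Filter.Eventually.of_forall fun p =>
      (abs_of_nonneg (div_nonneg (sq_nonneg _) (hMpos n p).le)).symm)))
  have hα0 : ∀ n n' p p', 0 ≤ α n n' p p' := fun n n' p p' =>
    le_trans hα₁.le (hbd n n' p p').1
  have hα0₂ : 0 ≤ α₂ := le_trans hα₁.le hα₁₂
  have htri : ∀ (n n' : ℕ) (p p' : ℝ),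
      |M n p * Θ n' p' - M n' p' * Θ n p| ≤ M n p * |Θ n' p'| + M n' p' * |Θ n p| := by
    intro n n' p p'
    calc |M n p * Θ n' p' - M n' p' * Θ n p|
        = |M n p * Θ n' p' + -(M n' p' * Θ n p)| := by rw [sub_eq_add_neg]
      _ ≤ |M n p * Θ n' p'| + |-(M n' p' * Θ n p)| := abs_add_le _ _
      _ = M n p * |Θ n' p'| + M n' p' * |Θ n p| := by
          rw [abs_neg, abs_mul, abs_mul, abs_of_pos (hMpos n p), abs_of_pos (hMpos n' p')]
  have hptw : ∀ (n n' : ℕ) (p p' : ℝ),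
      |α n n' p p' * (M n p * Θ n' p' - M n' p' * Θ n p)| ≤
        α₂ * (M n p * |Θ n' p'| + M n' p' * |Θ n p|) := by
    intro n n' p p'
    rw [abs_mul, abs_of_nonneg (hα0 n n' p p')]
    exact mul_le_mul (hbd n n' p p').2 (htri n n' p p') (abs_nonneg _) hα0₂
  have hsliceMeas : ∀ (n n' : ℕ) (p : ℝ), Measurable
      fun p' => α n n' p p' * (M n p * Θ n' p' - M n' p' * Θ n p) := by
    intro n n' p
    exact ((hαmeas n n').comp (measurable_const.prodMk measurable_id)).mul
      (((hΘm n').const_mul (M n p)).sub ((hMmeas n').mul_const (Θ n p)))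
  have hslice : ∀ (n n' : ℕ) (p : ℝ), Integrable
      fun p' => α n n' p p' * (M n p * Θ n' p' - M n' p' * Θ n p) := by
    intro n n' p
    apply Integrable.mono'
      (g := fun p' => α₂ * (M n p * |Θ n' p'| + M n' p' * |Θ n p|))
    · exact (((hTint n').abs.const_mul (M n p)).add
        ((hMint n').mul_const |Θ n p|)).const_mul α₂
    · exact (hsliceMeas n n' p).aestronglyMeasurable
    · refine Filter.Eventually.of_forall fun p' => ?_
      rw [Real.norm_eq_abs]
      exact hptw n n' p p'
  have hsliceb : ∀ (n n' : ℕ) (p : ℝ),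
      ∫ p', |α n n' p p' * (M n p * Θ n' p' - M n' p' * Θ n p)| ≤
        α₂ * (M n p * (∫ p', |Θ n' p'|) + (Real.exp (-ε n') / Z) * |Θ n p|) := by
    intro n n' p
    calc ∫ p', |α n n' p p' * (M n p * Θ n' p' - M n' p' * Θ n p)|
        ≤ ∫ p', α₂ * (M n p * |Θ n' p'| + M n' p' * |Θ n p|) := by
          apply integral_mono (hslice n n' p).abs
            ((((hTint n').abs.const_mul (M n p)).add
              ((hMint n').mul_const |Θ n p|)).const_mul α₂)
          intro p'
          exact hptw n n' p p'
      _ = α₂ * (M n p * (∫ p', |Θ n' p'|) + (∫ p', M n' p') * |Θ n p|) := by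
          rw [integral_const_mul, integral_add ((hTint n').abs.const_mul (M n p))
            ((hMint n').mul_const |Θ n p|), integral_const_mul, integral_mul_const]
      _ = α₂ * (M n p * (∫ p', |Θ n' p'|) + (Real.exp (-ε n') / Z) * |Θ n p|) := by
          rw [hMval n']
  -- representation of Q Θ as an integral over Ω
  have hg : ∀ (n : ℕ) (p : ℝ),
      Q Θ n p = ∫ ω' : ℕ × ℝ,
        α n ω'.1 p ω'.2 * (M n p * Θ ω'.1 ω'.2 - M ω'.1 ω'.2 * Θ n p) ∂μ := by
    intro n p
    rw [hQ]
    refine ((countProd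
      (fun n' p' => α n n' p p' * (M n p * Θ n' p' - M n' p' * Θ n p))
      ?_ (fun n' => hslice n n' p) ?_).2).symm
    · apply Measurable.aestronglyMeasurable
      apply Measurable.mul
      · exact (measurable_from_prod_countable_left (f := fun q : ℝ × ℕ => α n q.2 p q.1)
          fun n' => (hαmeas n n').comp
            (measurable_const.prodMk measurable_id)).comp measurable_swap
      · exact ((hTΩ.const_mul (M n p)).sub (hMΩmeas.mul_const (Θ n p)))
    · apply Summable.of_nonneg_of_le
        (fun n' => integral_nonneg fun p' => abs_nonneg _) (fun n' => hsliceb n n' p)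
      exact (((hTsumAbs.mul_left (M n p))).add
        ((hε.div_const Z).mul_right |Θ n p|)).mul_left α₂
  -- the kernel on the product space
  set G : (ℕ × ℝ) × ℕ × ℝ → ℝ := fun z =>
    α z.1.1 z.2.1 z.1.2 z.2.2 *
      (M z.1.1 z.1.2 * Θ z.2.1 z.2.2 - M z.2.1 z.2.2 * Θ z.1.1 z.1.2) *
      (Θ z.1.1 z.1.2 / M z.1.1 z.1.2) with hGdef
  have hGmeas : Measurable G := by
    rw [hGdef]
    exact (hαΩ.mul
      (((hMΩmeas.comp measurable_fst).mul (hTΩ.comp measurable_snd)).sub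
        ((hMΩmeas.comp measurable_snd).mul (hTΩ.comp measurable_fst)))).mul
      ((hTΩ.comp measurable_fst).div (hMΩmeas.comp measurable_fst))
  have hGint : Integrable G (μ.prod μ) := by
    apply Integrable.mono' (g := fun z =>
      α₂ * (|Θ z.1.1 z.1.2| * |Θ z.2.1 z.2.2| +
        (Θ z.1.1 z.1.2 ^ 2 / M z.1.1 z.1.2) * M z.2.1 z.2.2))
    · exact ((hTabsΩ.mul_prod hTabsΩ).add (hQuadΩ.mul_prod hMΩ)).const_mul α₂
    · exact hGmeas.aestronglyMeasurable
    · refine Filter.Eventually.of_forall fun z => ?_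
      obtain ⟨⟨n, p⟩, n', p'⟩ := z
      simp only [hGdef]
      have hW := hMpos n p
      have hW' := hMpos n' p'
      rw [Real.norm_eq_abs, abs_mul, abs_div, abs_of_pos hW]
      calc |α n n' p p' * (M n p * Θ n' p' - M n' p' * Θ n p)| * (|Θ n p| / M n p)
          ≤ (α₂ * (M n p * |Θ n' p'| + M n' p' * |Θ n p|)) * (|Θ n p| / M n p) := by
            apply mul_le_mul_of_nonneg_right (hptw n n' p p')
            positivity
        _ = α₂ * (|Θ n p| * |Θ n' p'| + Θ n p ^ 2 / M n p * M n' p') := by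
            field_simp
            rw [← sq_abs (Θ n p)]
            ring
  have hGswap : Integrable (fun z => G z.swap) (μ.prod μ) := hGint.swap
  -- H and its properties
  set H : ℕ × ℝ → ℝ := fun ω => Q Θ ω.1 ω.2 * (Θ ω.1 ω.2 / M ω.1 ω.2) with hHdef
  have hHG : ∀ ω : ℕ × ℝ, H ω = ∫ ω', G (ω, ω') ∂μ := by
    intro ω
    simp only [hHdef, hGdef]
    rw [hg ω.1 ω.2]
    exact (integral_mul_const _ _).symm
  have hHae : ∀ n, (fun p => H (n, p)) =ᶠ[ae (volume : Measure ℝ)]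
      fun p => -((p / m n) * Θ n p) := by
    intro n
    filter_upwards [hΘeq n] with p hp
    simp only [hHdef]
    rw [hp]
    field_simp [(hMpos n p).ne', (hm n).ne']
  have hHint : ∀ n, Integrable fun p => H (n, p) := fun n =>
    ((hInt1 n).neg).congr (hHae n).symm
  have hHabs : ∀ n, ∫ p, |H (n, p)| = ∫ p, |(p / m n) * Θ n p| := by
    intro n
    apply integral_congr_ae
    filter_upwards [hHae n] with p hp
    rw [hp, abs_neg]
  have hHsum : Summable fun n => ∫ p, |H (n, p)| :=
    hsum1.congr fun n => (hHabs n).symm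
  have hHmeasΩ : AEStronglyMeasurable (fun ω : ℕ × ℝ => H (ω.1, ω.2)) μ := by
    have h1 : (fun ω : ℕ × ℝ => H (ω.1, ω.2)) = fun ω => ∫ ω', G (ω, ω') ∂μ := by
      funext ω
      exact hHG (ω.1, ω.2)
    rw [h1]
    exact hGint.aestronglyMeasurable.integral_prod_right'
  obtain ⟨hHintμ, hHeq⟩ := countProd (fun n p => H (n, p)) hHmeasΩ hHint hHsum
  have hHS : ∫ ω, H (ω.1, ω.2) ∂μ = ∫ z, G z ∂(μ.prod μ) := by
    have h1 : (fun ω : ℕ × ℝ => H (ω.1, ω.2)) = fun ω => ∫ ω', G (ω, ω') ∂μ := by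
      funext ω
      exact hHG (ω.1, ω.2)
    rw [show (∫ ω, H (ω.1, ω.2) ∂μ) = ∫ ω, ∫ ω', G (ω, ω') ∂μ ∂μ by rw [← h1]]
    exact integral_integral hGint
  -- symmetrization
  have hGsum_nonpos : ∀ z : (ℕ × ℝ) × ℕ × ℝ, G z + G z.swap ≤ 0 := by
    intro z
    obtain ⟨⟨n, p⟩, n', p'⟩ := z
    simp only [hGdef, Prod.swap_prod_mk]
    rw [← hsym n n' p p']
    exact symm_nonpos _ _ _ _ _ (hα0 n n' p p') (hMpos n p) (hMpos n' p')
  have hSle : ∫ z, G z ∂(μ.prod μ) ≤ 0 := by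
    have h1 : ∫ z, (G z + G z.swap) ∂(μ.prod μ) ≤ 0 :=
      integral_nonpos hGsum_nonpos
    rw [integral_add hGint hGswap] at h1
    have h2 : ∫ z, G z.swap ∂(μ.prod μ) = ∫ z, G z ∂(μ.prod μ) :=
      integral_prod_swap G
    linarith
  -- conclusion
  have hterm : ∀ n, ∫ p, (p / m n) * Θ n p = -∫ p, H (n, p) := by
    intro n
    have h := integral_congr_ae (hHae n)
    rw [integral_neg] at h
    linarith
  have hfinal : (∑' n, ∫ p, (p / m n) * Θ n p) = -∑' n, ∫ p, H (n, p) := by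
    rw [← tsum_neg]
    exact tsum_congr hterm
  rw [hfinal, ← hHeq, hHS]
  linarith
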